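/- Let f1, f2 : ℝ≥0 → ℝ≥0 be the IOSCFs of two ESR modules, fi(u) = (1/2)(2u + Ki(u) − sqrt(Ki(u)² + 4 Ki_d u γi)) with Ki(u) = −u + ci + Ki_d γi and constants ci, Ki_d, γi > 0. Then the derivative of f2 ∘ f1 at 0 equals c1 c2 / ((c1 + K1_d γ1)(c2 + K2_d γ2)) and is strictly less than 1. -/

import Mathlib

lemma aux5 (c Kd γ : ℝ) (hc : 0 < c) (hK : 0 < Kd) (hγ : 0 < γ) :
    HasDerivAt (fun u : ℝ => (1/2) * (2*u + (-u + c + Kd * γ)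
      - Real.sqrt ((-u + c + Kd * γ)^2 + 4 * Kd * u * γ))) (c / (c + Kd * γ)) 0 := by
  have hca : 0 < c + Kd * γ := by positivity
  have h1 : HasDerivAt (fun u : ℝ => -u + c + Kd * γ) (-1) 0 := by
    simpa using (((hasDerivAt_id (0:ℝ)).neg.add_const c).add_const (Kd * γ))
  have hg : HasDerivAt (fun u : ℝ => (-u + c + Kd * γ)^2 + 4 * Kd * u * γ)
      (2 * (Kd * γ) - 2 * c) 0 := by
    have h2 := h1.pow 2
    have h3 : HasDerivAt (fun u : ℝ => 4 * Kd * u * γ) (4 * Kd * γ) 0 := by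
      simpa using ((hasDerivAt_id (0:ℝ)).const_mul (4*Kd)).mul_const γ
    have := h2.add h3
    exact this.congr_deriv (by ring)
  have hg0 : ((-(0:ℝ) + c + Kd * γ)^2 + 4 * Kd * 0 * γ) = (c + Kd * γ)^2 := by ring
  have hne : ((-(0:ℝ) + c + Kd * γ)^2 + 4 * Kd * 0 * γ) ≠ 0 := by
    rw [hg0]; positivity
  have hs := (Real.hasDerivAt_sqrt hne).comp 0 hg
  have hsq : Real.sqrt ((-(0:ℝ) + c + Kd * γ)^2 + 4 * Kd * 0 * γ) = c + Kd * γ := by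
    rw [hg0, Real.sqrt_sq hca.le]
  have hlin : HasDerivAt (fun u : ℝ => 2*u + (-u + c + Kd * γ)) (2 + -1) 0 := by
    exact (((hasDerivAt_id (0:ℝ)).const_mul 2).add h1).congr_deriv (by norm_num)
  have := ((hlin.sub hs).const_mul (1/2 : ℝ))
  refine this.congr_deriv ?_
  rw [hsq]
  field_simp
  ring

theorem stmt5 (c1 c2 K1d K2d γ1 γ2 : ℝ)
    (hc1 : 0 < c1) (hc2 : 0 < c2) (hK1 : 0 < K1d) (hK2 : 0 < K2d)
    (hγ1 : 0 < γ1) (hγ2 : 0 < γ2)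
    (f1 f2 : ℝ → ℝ)
    (hf1 : f1 = fun u => (1/2) * (2*u + (-u + c1 + K1d * γ1)
      - Real.sqrt ((-u + c1 + K1d * γ1)^2 + 4 * K1d * u * γ1)))
    (hf2 : f2 = fun u => (1/2) * (2*u + (-u + c2 + K2d * γ2)
      - Real.sqrt ((-u + c2 + K2d * γ2)^2 + 4 * K2d * u * γ2))) :
    HasDerivAt (f2 ∘ f1) (c1 * c2 / ((c1 + K1d * γ1) * (c2 + K2d * γ2))) 0 ∧
    c1 * c2 / ((c1 + K1d * γ1) * (c2 + K2d * γ2)) < 1 := by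
  have ha1 : 0 < c1 + K1d * γ1 := by positivity
  have ha2 : 0 < c2 + K2d * γ2 := by positivity
  have hd1 : HasDerivAt f1 (c1 / (c1 + K1d * γ1)) 0 := by
    rw [hf1]; exact aux5 c1 K1d γ1 hc1 hK1 hγ1
  have hd2 : HasDerivAt f2 (c2 / (c2 + K2d * γ2)) 0 := by
    rw [hf2]; exact aux5 c2 K2d γ2 hc2 hK2 hγ2
  have hf10 : f1 0 = 0 := by
    rw [hf1]
    simp only
    have : ((-(0:ℝ) + c1 + K1d * γ1)^2 + 4 * K1d * 0 * γ1) = (c1 + K1d * γ1)^2 := by ring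
    rw [this, Real.sqrt_sq ha1.le]
    ring
  constructor
  · have hd2' : HasDerivAt f2 (c2 / (c2 + K2d * γ2)) (f1 0) := by rw [hf10]; exact hd2
    have := hd2'.comp 0 hd1
    refine this.congr_deriv ?_
    field_simp
  · rw [div_lt_one (by positivity)]
    nlinarith [mul_pos hK1 hγ1, mul_pos hK2 hγ2, mul_pos hc1 (mul_pos hK2 hγ2),
      mul_pos hc2 (mul_pos hK1 hγ1), mul_pos (mul_pos hK1 hγ1) (mul_pos hK2 hγ2)]
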